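/- Fix C2 > 0 and m1, m2 ∈ ℝ, and set |m| = √(m1² + m2²). For every l > |m| + √(2·C2), the derivative of g(l) = l⁻⁴ · (9 + exp(2l(l − 2m2)/C2) + exp(2l(l + √3·m1 + m2)/C2) + exp(2l(l − √3·m1 + m2)/C2)) is strictly positive; consequently g is strictly increasing on the interval (|m| + √(2·C2), ∞) and no global minimizer of g over (0,∞) lies in that interval. -/
import Mathlib


open Real

/-- The (rescaled) variance `S(l; C2)` of the error on the estimate of `C2`,
as a function of the edge length `l`. -/
noncomputable def errVarC2 (C2 m1 m2 l : ℝ) : ℝ :=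
  (l ^ 4)⁻¹ * (9 + Real.exp (2 * l * (l - 2 * m2) / C2)
    + Real.exp (2 * l * (l + Real.sqrt 3 * m1 + m2) / C2)
    + Real.exp (2 * l * (l - Real.sqrt 3 * m1 + m2) / C2))

lemma hasDerivAt_errVarC2 (C2 m1 m2 l : ℝ) (hC2 : C2 ≠ 0) (hl : l ≠ 0) :
    HasDerivAt (errVarC2 C2 m1 m2)
      ((Real.exp (2 * l * (l - 2 * m2) / C2) * (4 * l ^ 2 + 2 * l * (-(2 * m2)) - 4 * C2)
        + Real.exp (2 * l * (l + Real.sqrt 3 * m1 + m2) / C2)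
            * (4 * l ^ 2 + 2 * l * (Real.sqrt 3 * m1 + m2) - 4 * C2)
        + Real.exp (2 * l * (l - Real.sqrt 3 * m1 + m2) / C2)
            * (4 * l ^ 2 + 2 * l * (-(Real.sqrt 3 * m1) + m2) - 4 * C2)
        - 36 * C2) / (C2 * l ^ 5)) l := by
  have h1 : HasDerivAt (fun x : ℝ => Real.exp (2 * x * (x - 2 * m2) / C2))
      (Real.exp (2 * l * (l - 2 * m2) / C2) * ((2 * 1 * (l - 2 * m2) + 2 * l * 1) / C2)) l :=
    ((((hasDerivAt_id l).const_mul 2).mul ((hasDerivAt_id l).sub_const (2 * m2))).div_const C2).exp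
  have h2 : HasDerivAt (fun x : ℝ => Real.exp (2 * x * (x + Real.sqrt 3 * m1 + m2) / C2))
      (Real.exp (2 * l * (l + Real.sqrt 3 * m1 + m2) / C2)
        * ((2 * 1 * (l + Real.sqrt 3 * m1 + m2) + 2 * l * 1) / C2)) l :=
    ((((hasDerivAt_id l).const_mul 2).mul
      (((hasDerivAt_id l).add_const (Real.sqrt 3 * m1)).add_const m2)).div_const C2).exp
  have h3 : HasDerivAt (fun x : ℝ => Real.exp (2 * x * (x - Real.sqrt 3 * m1 + m2) / C2))
      (Real.exp (2 * l * (l - Real.sqrt 3 * m1 + m2) / C2)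
        * ((2 * 1 * (l - Real.sqrt 3 * m1 + m2) + 2 * l * 1) / C2)) l :=
    ((((hasDerivAt_id l).const_mul 2).mul
      (((hasDerivAt_id l).sub_const (Real.sqrt 3 * m1)).add_const m2)).div_const C2).exp
  have hsum := (((hasDerivAt_const l (9:ℝ)).add h1).add h2).add h3
  have hinv := (hasDerivAt_pow 4 l).inv (pow_ne_zero 4 hl)
  have hmul := hinv.mul hsum
  have hD : (Real.exp (2 * l * (l - 2 * m2) / C2) * (4 * l ^ 2 + 2 * l * (-(2 * m2)) - 4 * C2)
        + Real.exp (2 * l * (l + Real.sqrt 3 * m1 + m2) / C2)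
            * (4 * l ^ 2 + 2 * l * (Real.sqrt 3 * m1 + m2) - 4 * C2)
        + Real.exp (2 * l * (l - Real.sqrt 3 * m1 + m2) / C2)
            * (4 * l ^ 2 + 2 * l * (-(Real.sqrt 3 * m1) + m2) - 4 * C2)
        - 36 * C2) / (C2 * l ^ 5)
      = -(↑4 * l ^ (4 - 1)) / (l ^ 4) ^ 2
          * (9 + Real.exp (2 * l * (l - 2 * m2) / C2)
            + Real.exp (2 * l * (l + Real.sqrt 3 * m1 + m2) / C2)
            + Real.exp (2 * l * (l - Real.sqrt 3 * m1 + m2) / C2))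
        + (l ^ 4)⁻¹
          * (0 + Real.exp (2 * l * (l - 2 * m2) / C2) * ((2 * 1 * (l - 2 * m2) + 2 * l * 1) / C2)
            + Real.exp (2 * l * (l + Real.sqrt 3 * m1 + m2) / C2)
                * ((2 * 1 * (l + Real.sqrt 3 * m1 + m2) + 2 * l * 1) / C2)
            + Real.exp (2 * l * (l - Real.sqrt 3 * m1 + m2) / C2)
                * ((2 * 1 * (l - Real.sqrt 3 * m1 + m2) + 2 * l * 1) / C2)) := by
    push_cast
    field_simp
    ring
  rw [hD]
  exact hmul

lemma abs_le_norm2 (m1 m2 : ℝ) : m2 ≤ Real.sqrt (m1 ^ 2 + m2 ^ 2) := by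
  have h := Real.sqrt_le_sqrt (show m2 ^ 2 ≤ m1 ^ 2 + m2 ^ 2 by nlinarith [sq_nonneg m1])
  rw [Real.sqrt_sq_eq_abs] at h
  linarith [le_abs_self m2]

lemma maxproj (m1 m2 : ℝ) :
    Real.sqrt (m1 ^ 2 + m2 ^ 2) ≤ -(2 * m2)
    ∨ Real.sqrt (m1 ^ 2 + m2 ^ 2) ≤ Real.sqrt 3 * m1 + m2
    ∨ Real.sqrt (m1 ^ 2 + m2 ^ 2) ≤ -(Real.sqrt 3 * m1) + m2 := by
  set r := Real.sqrt (m1 ^ 2 + m2 ^ 2) with hr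
  have hr0 : 0 ≤ r := Real.sqrt_nonneg _
  have hr2 : r ^ 2 = m1 ^ 2 + m2 ^ 2 := Real.sq_sqrt (by positivity)
  have h3 : Real.sqrt 3 ^ 2 = 3 := Real.sq_sqrt (by norm_num)
  have h3n : (0:ℝ) ≤ Real.sqrt 3 := Real.sqrt_nonneg 3
  have hm2r : m2 ≤ r := abs_le_norm2 m1 m2
  by_cases hm2 : m2 ≤ -r / 2
  · left; linarith
  · push_neg at hm2
    by_cases hm1 : 0 ≤ m1
    · right; left
      have h1 : 0 ≤ Real.sqrt 3 * m1 := mul_nonneg h3n hm1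
      have hsq : (r - m2) ^ 2 ≤ (Real.sqrt 3 * m1) ^ 2 := by
        nlinarith [mul_nonneg (show (0:ℝ) ≤ r - m2 by linarith)
          (show (0:ℝ) ≤ 2 * r + 4 * m2 by linarith)]
      nlinarith [hsq, h1, (show (0:ℝ) ≤ r - m2 by linarith)]
    · push_neg at hm1
      right; right
      have h1 : 0 ≤ -(Real.sqrt 3 * m1) := by nlinarith
      have hsq : (r - m2) ^ 2 ≤ (-(Real.sqrt 3 * m1)) ^ 2 := by
        nlinarith [mul_nonneg (show (0:ℝ) ≤ r - m2 by linarith)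
          (show (0:ℝ) ≤ 2 * r + 4 * m2 by linarith)]
      nlinarith [hsq, h1, (show (0:ℝ) ≤ r - m2 by linarith)]

lemma lowerproj2 (m1 m2 : ℝ) :
    -(2 * Real.sqrt (m1 ^ 2 + m2 ^ 2)) ≤ Real.sqrt 3 * m1 + m2 := by
  set r := Real.sqrt (m1 ^ 2 + m2 ^ 2) with hr
  have hr0 : 0 ≤ r := Real.sqrt_nonneg _
  have hr2 : r ^ 2 = m1 ^ 2 + m2 ^ 2 := Real.sq_sqrt (by positivity)
  have h3 : Real.sqrt 3 ^ 2 = 3 := Real.sq_sqrt (by norm_num)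
  have hsqA : (Real.sqrt 3 * m1 + m2) ^ 2 ≤ (2 * r) ^ 2 := by
    nlinarith [sq_nonneg (m1 - Real.sqrt 3 * m2)]
  nlinarith [hsqA, hr0, sq_nonneg (Real.sqrt 3 * m1 + m2 + 2 * r)]

lemma lowerproj3 (m1 m2 : ℝ) :
    -(2 * Real.sqrt (m1 ^ 2 + m2 ^ 2)) ≤ -(Real.sqrt 3 * m1) + m2 := by
  have h0 := lowerproj2 (-m1) m2
  have h : (-m1) ^ 2 + m2 ^ 2 = m1 ^ 2 + m2 ^ 2 := by ring
  rw [h] at h0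
  linarith

lemma exp4_gt_nine : (9:ℝ) < Real.exp 4 := by
  have h2 : (3:ℝ) < Real.exp 2 := by
    have := Real.add_one_lt_exp (show (2:ℝ) ≠ 0 by norm_num)
    linarith
  have h4 : Real.exp 4 = Real.exp 2 * Real.exp 2 := by
    rw [← Real.exp_add]; norm_num
  nlinarith [Real.exp_pos 2]

lemma deriv_errVarC2_pos (C2 m1 m2 : ℝ) (hC2 : 0 < C2) {l : ℝ}
    (hl : Real.sqrt (m1 ^ 2 + m2 ^ 2) + Real.sqrt (2 * C2) < l) :
    0 < deriv (errVarC2 C2 m1 m2) l := by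
  set r := Real.sqrt (m1 ^ 2 + m2 ^ 2) with hrdef
  set s := Real.sqrt (2 * C2) with hsdef
  have hr0 : 0 ≤ r := Real.sqrt_nonneg _
  have hs2 : s ^ 2 = 2 * C2 := Real.sq_sqrt (by positivity)
  have hs0 : 0 < s := Real.sqrt_pos.mpr (by linarith)
  have hl0 : 0 < l := by linarith
  rw [(hasDerivAt_errVarC2 C2 m1 m2 l (ne_of_gt hC2) (ne_of_gt hl0)).deriv]
  apply div_pos _ (by positivity)
  have key : ∀ a : ℝ, -(2 * r) ≤ a → 4 * C2 < 4 * l ^ 2 + 2 * l * a - 4 * C2 := by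
    intro a ha
    nlinarith [mul_nonneg (show (0:ℝ) ≤ a + 2 * r by linarith) hl0.le,
      mul_pos hl0 (show (0:ℝ) < l - r - s by linarith),
      mul_pos hs0 (show (0:ℝ) < l - s by linarith)]
  have hk1 := key (-(2 * m2)) (by linarith [abs_le_norm2 m1 m2])
  have hk2 := key (Real.sqrt 3 * m1 + m2) (lowerproj2 m1 m2)
  have hk3 := key (-(Real.sqrt 3 * m1) + m2) (lowerproj3 m1 m2)
  have hE1 : (0:ℝ) < Real.exp (2 * l * (l - 2 * m2) / C2) := Real.exp_pos _
  have hE2 : (0:ℝ) < Real.exp (2 * l * (l + Real.sqrt 3 * m1 + m2) / C2) := Real.exp_pos _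
  have hE3 : (0:ℝ) < Real.exp (2 * l * (l - Real.sqrt 3 * m1 + m2) / C2) := Real.exp_pos _
  rcases maxproj m1 m2 with hM | hM | hM
  · have h4 : (4:ℝ) < 2 * l * (l - 2 * m2) / C2 := by
      rw [lt_div_iff₀ hC2]
      nlinarith [mul_pos hl0 (show (0:ℝ) < l - s by linarith),
        mul_pos hs0 (show (0:ℝ) < l - s by linarith),
        mul_nonneg hl0.le (show (0:ℝ) ≤ -(2 * m2) by linarith)]
    have hE : (9:ℝ) < Real.exp (2 * l * (l - 2 * m2) / C2) :=
      lt_trans exp4_gt_nine (Real.exp_lt_exp.mpr h4)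
    have hp1 : 36 * C2 < Real.exp (2 * l * (l - 2 * m2) / C2)
        * (4 * l ^ 2 + 2 * l * (-(2 * m2)) - 4 * C2) := by
      calc 36 * C2 = 9 * (4 * C2) := by ring
        _ < _ := mul_lt_mul hE hk1.le (by positivity) hE1.le
    have hp2 : 0 < Real.exp (2 * l * (l + Real.sqrt 3 * m1 + m2) / C2)
        * (4 * l ^ 2 + 2 * l * (Real.sqrt 3 * m1 + m2) - 4 * C2) :=
      mul_pos hE2 (by linarith)
    have hp3 : 0 < Real.exp (2 * l * (l - Real.sqrt 3 * m1 + m2) / C2)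
        * (4 * l ^ 2 + 2 * l * (-(Real.sqrt 3 * m1) + m2) - 4 * C2) :=
      mul_pos hE3 (by linarith)
    linarith
  · have h4 : (4:ℝ) < 2 * l * (l + Real.sqrt 3 * m1 + m2) / C2 := by
      rw [lt_div_iff₀ hC2]
      nlinarith [mul_pos hl0 (show (0:ℝ) < l - s by linarith),
        mul_pos hs0 (show (0:ℝ) < l - s by linarith),
        mul_nonneg hl0.le (show (0:ℝ) ≤ Real.sqrt 3 * m1 + m2 by linarith)]
    have hE : (9:ℝ) < Real.exp (2 * l * (l + Real.sqrt 3 * m1 + m2) / C2) :=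
      lt_trans exp4_gt_nine (Real.exp_lt_exp.mpr h4)
    have hp2 : 36 * C2 < Real.exp (2 * l * (l + Real.sqrt 3 * m1 + m2) / C2)
        * (4 * l ^ 2 + 2 * l * (Real.sqrt 3 * m1 + m2) - 4 * C2) := by
      calc 36 * C2 = 9 * (4 * C2) := by ring
        _ < _ := mul_lt_mul hE hk2.le (by positivity) hE2.le
    have hp1 : 0 < Real.exp (2 * l * (l - 2 * m2) / C2)
        * (4 * l ^ 2 + 2 * l * (-(2 * m2)) - 4 * C2) :=
      mul_pos hE1 (by linarith)
    have hp3 : 0 < Real.exp (2 * l * (l - Real.sqrt 3 * m1 + m2) / C2)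
        * (4 * l ^ 2 + 2 * l * (-(Real.sqrt 3 * m1) + m2) - 4 * C2) :=
      mul_pos hE3 (by linarith)
    linarith
  · have h4 : (4:ℝ) < 2 * l * (l - Real.sqrt 3 * m1 + m2) / C2 := by
      rw [lt_div_iff₀ hC2]
      nlinarith [mul_pos hl0 (show (0:ℝ) < l - s by linarith),
        mul_pos hs0 (show (0:ℝ) < l - s by linarith),
        mul_nonneg hl0.le (show (0:ℝ) ≤ -(Real.sqrt 3 * m1) + m2 by linarith)]
    have hE : (9:ℝ) < Real.exp (2 * l * (l - Real.sqrt 3 * m1 + m2) / C2) :=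
      lt_trans exp4_gt_nine (Real.exp_lt_exp.mpr h4)
    have hp3 : 36 * C2 < Real.exp (2 * l * (l - Real.sqrt 3 * m1 + m2) / C2)
        * (4 * l ^ 2 + 2 * l * (-(Real.sqrt 3 * m1) + m2) - 4 * C2) := by
      calc 36 * C2 = 9 * (4 * C2) := by ring
        _ < _ := mul_lt_mul hE hk3.le (by positivity) hE3.le
    have hp1 : 0 < Real.exp (2 * l * (l - 2 * m2) / C2)
        * (4 * l ^ 2 + 2 * l * (-(2 * m2)) - 4 * C2) :=
      mul_pos hE1 (by linarith)
    have hp2 : 0 < Real.exp (2 * l * (l + Real.sqrt 3 * m1 + m2) / C2)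
        * (4 * l ^ 2 + 2 * l * (Real.sqrt 3 * m1 + m2) - 4 * C2) :=
      mul_pos hE2 (by linarith)
    linarith

/-- For `l > |m| + √(2C2)` the derivative of `g` is strictly positive, hence `g` is
strictly increasing there and no global minimizer of `g` lies in that interval. -/
theorem errVarC2_increasing_beyond (C2 m1 m2 : ℝ) (hC2 : 0 < C2) :
    (∀ l : ℝ, Real.sqrt (m1 ^ 2 + m2 ^ 2) + Real.sqrt (2 * C2) < l →
      0 < deriv (errVarC2 C2 m1 m2) l) ∧
    StrictMonoOn (errVarC2 C2 m1 m2)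
      (Set.Ioi (Real.sqrt (m1 ^ 2 + m2 ^ 2) + Real.sqrt (2 * C2))) ∧
    (∀ lstar : ℝ, 0 < lstar →
      (∀ l : ℝ, 0 < l → errVarC2 C2 m1 m2 lstar ≤ errVarC2 C2 m1 m2 l) →
      lstar ∉ Set.Ioi (Real.sqrt (m1 ^ 2 + m2 ^ 2) + Real.sqrt (2 * C2))) := by
  have hr0 : 0 ≤ Real.sqrt (m1 ^ 2 + m2 ^ 2) := Real.sqrt_nonneg _
  have hs0 : 0 < Real.sqrt (2 * C2) := Real.sqrt_pos.mpr (by linarith)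
  have hb0 : 0 < Real.sqrt (m1 ^ 2 + m2 ^ 2) + Real.sqrt (2 * C2) := by linarith
  have hpos : ∀ l : ℝ, Real.sqrt (m1 ^ 2 + m2 ^ 2) + Real.sqrt (2 * C2) < l →
      0 < deriv (errVarC2 C2 m1 m2) l := fun l hl => deriv_errVarC2_pos C2 m1 m2 hC2 hl
  have hmono : StrictMonoOn (errVarC2 C2 m1 m2)
      (Set.Ioi (Real.sqrt (m1 ^ 2 + m2 ^ 2) + Real.sqrt (2 * C2))) := by
    apply strictMonoOn_of_deriv_pos (convex_Ioi _)
    · intro x hx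
      have hx0 : 0 < x := lt_trans hb0 hx
      exact ((hasDerivAt_errVarC2 C2 m1 m2 x (ne_of_gt hC2)
        (ne_of_gt hx0)).differentiableAt.continuousAt).continuousWithinAt
    · intro x hx
      rw [interior_Ioi] at hx
      exact hpos x hx
  refine ⟨hpos, hmono, ?_⟩
  intro lstar hlstar hmin hmem
  rw [Set.mem_Ioi] at hmem
  set b := Real.sqrt (m1 ^ 2 + m2 ^ 2) + Real.sqrt (2 * C2) with hbdef
  have h1 : b < (b + lstar) / 2 := by linarith
  have h2 : (b + lstar) / 2 < lstar := by linarith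
  have hlt := hmono (Set.mem_Ioi.mpr h1) (Set.mem_Ioi.mpr hmem) h2
  have hge := hmin ((b + lstar) / 2) (by linarith)
  linarith
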